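/- arXiv:2205.03570 — 2 statements merged into one kernel-verified Lean document; each statement's English description precedes it below -/
import Mathlib

section
/- For every v ∈ int(K), the matrix T_v belongs to the scaling group G, is symmetric positive definite, and satisfies T_v e = v; moreover T_v is the unique symmetric positive definite element of G mapping the unit element e to v. -/
open scoped BigOperators
open Matrix

namespace SOCP

/-- Index type for a block vector with `k` blocks, block `i` having dimension `d i + 1`. -/
abbrev Idx {k : ℕ} (d : Fin k → ℕ) : Type := (i : Fin k) × Fin (d i + 1)

/-- The `i`-th block of a block vector. -/
def blk {k : ℕ} {d : Fin k → ℕ} (v : Idx d → ℝ) (i : Fin k) : Fin (d i + 1) → ℝ :=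
  fun j => v ⟨i, j⟩

/-- Squared Euclidean norm of the tail `u_{2:m}` of a single block. -/
def tailNormSq {m : ℕ} (u : Fin (m + 1) → ℝ) : ℝ := ∑ j : Fin m, u j.succ ^ 2

/-- Euclidean norm of the tail `u_{2:m}` of a single block. -/
noncomputable def tailNorm {m : ℕ} (u : Fin (m + 1) → ℝ) : ℝ := Real.sqrt (tailNormSq u)

/-- Membership in the cone `K` (a direct product of second-order cones). -/
def inK {k : ℕ} {d : Fin k → ℕ} (v : Idx d → ℝ) : Prop :=
  ∀ i : Fin k, tailNorm (blk v i) ≤ v ⟨i, 0⟩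

/-- Membership in the interior of the cone `K`. -/
def inIntK {k : ℕ} {d : Fin k → ℕ} (v : Idx d → ℝ) : Prop :=
  ∀ i : Fin k, tailNorm (blk v i) < v ⟨i, 0⟩

/-- Euclidean inner product of vectors. -/
def dotV {ι : Type*} [Fintype ι] (u v : ι → ℝ) : ℝ := ∑ a, u a * v a

/-- Euclidean norm of a vector. -/
noncomputable def vnorm {ι : Type*} [Fintype ι] (v : ι → ℝ) : ℝ :=
  Real.sqrt (∑ a, v a ^ 2)

/-- Blockwise Jordan product. -/
def jmul {k : ℕ} {d : Fin k → ℕ} (u v : Idx d → ℝ) : Idx d → ℝ := fun a =>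
  if a.2 = 0 then ∑ j, u ⟨a.1, j⟩ * v ⟨a.1, j⟩
  else u ⟨a.1, 0⟩ * v a + v ⟨a.1, 0⟩ * u a

/-- The unit element `e` of the Jordan algebra. -/
def unitE {k : ℕ} {d : Fin k → ℕ} : Idx d → ℝ := fun a => if a.2 = 0 then 1 else 0

/-- `λ_min` of the `i`-th block. -/
noncomputable def lamMin {k : ℕ} {d : Fin k → ℕ} (v : Idx d → ℝ) (i : Fin k) : ℝ :=
  v ⟨i, 0⟩ - tailNorm (blk v i)

/-- `λ_max` of the `i`-th block. -/
noncomputable def lamMax {k : ℕ} {d : Fin k → ℕ} (v : Idx d → ℝ) (i : Fin k) : ℝ :=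
  v ⟨i, 0⟩ + tailNorm (blk v i)

/-- Arrow-head matrix of a single block. -/
def arrowBlk {m : ℕ} (u : Fin (m + 1) → ℝ) : Matrix (Fin (m + 1)) (Fin (m + 1)) ℝ :=
  Matrix.of fun j j' =>
    if j = 0 then u j' else if j' = 0 then u j else if j = j' then u 0 else 0

/-- Arrow-head matrix `mat(v)` (block diagonal). -/
def matV {k : ℕ} {d : Fin k → ℕ} (v : Idx d → ℝ) : Matrix (Idx d) (Idx d) ℝ :=
  Matrix.blockDiagonal' fun i => arrowBlk (blk v i)

/-- `β_u = sqrt(u_1^2 - ‖u_{2:m}‖^2)` for a single block. -/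
noncomputable def betaOf {m : ℕ} (u : Fin (m + 1) → ℝ) : ℝ :=
  Real.sqrt (u 0 ^ 2 - tailNormSq u)

/-- The matrix `T_u` for a single block. -/
noncomputable def Tblk {m : ℕ} (u : Fin (m + 1) → ℝ) :
    Matrix (Fin (m + 1)) (Fin (m + 1)) ℝ :=
  Matrix.of fun j j' =>
    if j = 0 then u j'
    else if j' = 0 then u j
    else (if j = j' then betaOf u else 0) + u j * u j' / (betaOf u + u 0)

/-- The matrix `T_x` (block diagonal). -/
noncomputable def TV {k : ℕ} {d : Fin k → ℕ} (x : Idx d → ℝ) :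
    Matrix (Idx d) (Idx d) ℝ :=
  Matrix.blockDiagonal' fun i => Tblk (blk x i)

/-- `w_{xs} = T_x s`. -/
noncomputable def wxs {k : ℕ} {d : Fin k → ℕ} (x s : Idx d → ℝ) : Idx d → ℝ :=
  (TV x).mulVec s

/-- Central-path coefficient `μ(x,s) = xᵀs/k`. -/
noncomputable def muV {k : ℕ} {d : Fin k → ℕ} (x s : Idx d → ℝ) : ℝ :=
  dotV x s / (k : ℝ)

/-- Central-path distance `d_2(x,s) = √2 ‖w_{xs} - μ e‖`. -/
noncomputable def d2 {k : ℕ} {d : Fin k → ℕ} (x s : Idx d → ℝ) : ℝ :=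
  Real.sqrt 2 * vnorm (wxs x s - muV x s • unitE)

/-- Central-path distance `d_∞(x,s)`. -/
noncomputable def dInf {k : ℕ} {d : Fin k → ℕ} (x s : Idx d → ℝ) : ℝ :=
  ⨆ i : Fin k, max |lamMax (wxs x s) i - muV x s| |lamMin (wxs x s) i - muV x s|

/-- The matrix `Q = diag(1, -I)` for a single block. -/
def Qblk {m : ℕ} : Matrix (Fin (m + 1)) (Fin (m + 1)) ℝ :=
  Matrix.of fun j j' => if j = j' then (if j = 0 then (1 : ℝ) else -1) else 0

/-- The scaling group `G` of block matrices `Θ G` with `(Gⁱ)ᵀ Qⁱ Gⁱ = Qⁱ`. -/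
def scalingGroup {k : ℕ} (d : Fin k → ℕ) : Set (Matrix (Idx d) (Idx d) ℝ) :=
  { D | ∃ (θ : Fin k → ℝ) (G : ∀ i, Matrix (Fin (d i + 1)) (Fin (d i + 1)) ℝ),
      (∀ i, 0 < θ i) ∧ (∀ i, (G i)ᵀ * Qblk * G i = Qblk) ∧
      D = Matrix.blockDiagonal' fun i => θ i • G i }

/-- Operator 2-norm of a matrix. -/
noncomputable def op2 {m n : Type*} [Fintype m] [Fintype n] [DecidableEq n]
    (M : Matrix m n ℝ) : ℝ :=
  ‖LinearMap.toContinuousLinearMap (Matrix.toEuclideanLin M)‖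

/-- `R_{xs} = T_x X⁻¹ S T_x`. -/
noncomputable def Rxs {k : ℕ} {d : Fin k → ℕ} (x s : Idx d → ℝ) :
    Matrix (Idx d) (Idx d) ℝ :=
  TV x * (matV x)⁻¹ * matV s * TV x

/-- The scaled Newton system of the infeasible IPM (Monteiro–Zhang family). -/
def NewtonSys {k p : ℕ} {d : Fin k → ℕ} (A : Matrix (Fin p) (Idx d) ℝ)
    (Cm : Matrix (Idx d) (Idx d) ℝ) (x : Idx d → ℝ) (y : Fin p → ℝ) (s : Idx d → ℝ)
    (ν : ℝ) (D : Matrix (Idx d) (Idx d) ℝ)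
    (dx : Idx d → ℝ) (dy : Fin p → ℝ) (ds : Idx d → ℝ) : Prop :=
  A.mulVec dx = -((1 - ν) • A.mulVec x) ∧
  Aᵀ.mulVec dy + Cm.mulVec dx + ds =
    -((1 - ν) • (Aᵀ.mulVec y + Cm.mulVec x + s)) ∧
  (matV ((D⁻¹)ᵀ.mulVec x)).mulVec (D.mulVec ds)
      + (matV (D.mulVec s)).mulVec ((D⁻¹)ᵀ.mulVec dx)
    = (ν * muV x s) • unitE - jmul ((D⁻¹)ᵀ.mulVec x) (D.mulVec s)

/-- Central-path neighborhood `N_2(γ)`. -/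
def N2 {k : ℕ} (d : Fin k → ℕ) (p : ℕ) (γ : ℝ) :
    Set ((Idx d → ℝ) × (Fin p → ℝ) × (Idx d → ℝ)) :=
  { z | inIntK z.1 ∧ inIntK z.2.2 ∧ d2 z.1 z.2.2 ≤ γ * muV z.1 z.2.2 }

/-- Central-path neighborhood `N_∞(γ)`. -/
def NInf {k : ℕ} (d : Fin k → ℕ) (p : ℕ) (γ : ℝ) :
    Set ((Idx d → ℝ) × (Fin p → ℝ) × (Idx d → ℝ)) :=
  { z | inIntK z.1 ∧ inIntK z.2.2 ∧ dInf z.1 z.2.2 ≤ γ * muV z.1 z.2.2 }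

/-- The matrix `U_u` for a single block: zero first row and column and lower-right block
`(u_1 - β_u) P_u`, with `P_u` the projection onto the complement of the tail of `u`
(zero when the tail vanishes). -/
noncomputable def Ublk {m : ℕ} (u : Fin (m + 1) → ℝ) :
    Matrix (Fin (m + 1)) (Fin (m + 1)) ℝ :=
  Matrix.of fun j j' =>
    if j = 0 ∨ j' = 0 then 0
    else if tailNormSq u = 0 then 0
    else (u 0 - betaOf u) * ((if j = j' then (1 : ℝ) else 0) - u j * u j' / tailNormSq u)

/-- The block-diagonal matrix `U_x`. -/
noncomputable def UV {k : ℕ} {d : Fin k → ℕ} (x : Idx d → ℝ) :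
    Matrix (Idx d) (Idx d) ℝ :=
  Matrix.blockDiagonal' fun i => Ublk (blk x i)

/-- `Γ_p = 2 (γ²/2 + (1-ν)² k)^{1/2} / (1 - 3γ)`. -/
noncomputable def GammaP (γ ν : ℝ) (k : ℕ) : ℝ :=
  2 * Real.sqrt (γ ^ 2 / 2 + (1 - ν) ^ 2 * k) / (1 - 3 * γ)

/-- `Γ̃ = (4(γ² + δ²)/(1-3γ)²) (1 - δ/√(2k))⁻¹`. -/
noncomputable def GammaTilde (γ δ : ℝ) (k : ℕ) : ℝ :=
  4 * (γ ^ 2 + δ ^ 2) / (1 - 3 * γ) ^ 2 * (1 - δ / Real.sqrt (2 * k))⁻¹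


/-! ### Auxiliary lemmas for Proposition 2 -/

section AuxBlock

variable {m : ℕ} {u : Fin (m + 1) → ℝ}

/-- The first unit coordinate vector of a single block. -/
def e0 {m : ℕ} : Fin (m + 1) → ℝ := fun j => if j = 0 then 1 else 0

lemma tailNormSq_nonneg (u : Fin (m+1) → ℝ) : 0 ≤ tailNormSq u :=
  Finset.sum_nonneg fun _ _ => sq_nonneg _

lemma tailNorm_nonneg (u : Fin (m+1) → ℝ) : 0 ≤ tailNorm u := Real.sqrt_nonneg _

section interior
variable (hu : tailNorm u < u 0)
include hu

lemma u0_pos : 0 < u 0 := lt_of_le_of_lt (tailNorm_nonneg u) hu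

lemma tailNormSq_lt : tailNormSq u < u 0 ^ 2 := by
  have h1 : tailNorm u ^ 2 < u 0 ^ 2 :=
    pow_lt_pow_left₀ hu (tailNorm_nonneg u) (by norm_num)
  have h2 : tailNorm u ^ 2 = tailNormSq u := Real.sq_sqrt (tailNormSq_nonneg u)
  linarith

lemma beta_sq : betaOf u ^ 2 = u 0 ^ 2 - tailNormSq u :=
  Real.sq_sqrt (by have := tailNormSq_lt hu; linarith)

lemma beta_pos : 0 < betaOf u :=
  Real.sqrt_pos.2 (by have := tailNormSq_lt hu; linarith)

lemma A_pos : 0 < betaOf u + u 0 := by have := beta_pos hu; have := u0_pos hu; linarith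

end interior

lemma Tblk_transpose (u : Fin (m+1) → ℝ) : (Tblk u)ᵀ = Tblk u := by
  ext j j'
  simp only [Matrix.transpose_apply, Tblk, Matrix.of_apply]
  rcases eq_or_ne j 0 with hj | hj <;> rcases eq_or_ne j' 0 with hj' | hj' <;>
    simp [hj, hj', eq_comm, mul_comm]

lemma Tblk_mulVec_e0 (u : Fin (m+1) → ℝ) : (Tblk u) *ᵥ e0 = u := by
  funext j
  simp only [Matrix.mulVec, dotProduct, e0, mul_ite, mul_one, mul_zero,
    Finset.sum_ite_eq', Finset.mem_univ, if_true]
  rcases eq_or_ne j 0 with hj | hj <;> simp [Tblk, hj]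

lemma tail_row_sum (u : Fin (m+1) → ℝ) (c : ℝ) (j : Fin m) (f : Fin m → ℝ) :
    ∑ r : Fin m, ((if j = r then c else 0) + u j.succ * u r.succ / (betaOf u + u 0)) * f r
      = c * f j + u j.succ * (∑ r : Fin m, u r.succ * f r) / (betaOf u + u 0) := by
  have : ∀ r : Fin m, ((if j = r then c else 0) + u j.succ * u r.succ / (betaOf u + u 0)) * f r
      = (if j = r then c * f r else 0) + u j.succ / (betaOf u + u 0) * (u r.succ * f r) := by
    intro r; split_ifs <;> ring
  rw [Finset.sum_congr rfl fun r _ => this r, Finset.sum_add_distrib, ← Finset.mul_sum]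
  simp [Finset.sum_ite_eq]
  ring

lemma Tblk_mulVec_succ (u x : Fin (m+1) → ℝ) (j : Fin m) :
    ((Tblk u) *ᵥ x) j.succ = u j.succ * x 0 + betaOf u * x j.succ
      + u j.succ * (∑ r : Fin m, u r.succ * x r.succ) / (betaOf u + u 0) := by
  rw [Matrix.mulVec, dotProduct, Fin.sum_univ_succ]
  have h0 : Tblk u j.succ 0 = u j.succ := by simp [Tblk, Fin.succ_ne_zero]
  have hs : ∀ r : Fin m, Tblk u j.succ r.succ
      = (if j = r then betaOf u else 0) + u j.succ * u r.succ / (betaOf u + u 0) := by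
    intro r; simp [Tblk, Fin.succ_ne_zero, Fin.succ_inj]
  rw [h0]
  simp_rw [hs]
  rw [tail_row_sum u (betaOf u) j (fun r => x r.succ)]
  ring

lemma Tblk_mulVec_zero (u x : Fin (m+1) → ℝ) :
    ((Tblk u) *ᵥ x) 0 = u 0 * x 0 + ∑ r : Fin m, u r.succ * x r.succ := by
  rw [Matrix.mulVec, dotProduct, Fin.sum_univ_succ]
  simp [Tblk]

lemma Tblk_quadform (u x : Fin (m+1) → ℝ) :
    x ⬝ᵥ ((Tblk u) *ᵥ x) = u 0 * x 0 ^ 2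
      + 2 * x 0 * (∑ r : Fin m, u r.succ * x r.succ)
      + betaOf u * (∑ r : Fin m, x r.succ ^ 2)
      + (∑ r : Fin m, u r.succ * x r.succ) ^ 2 / (betaOf u + u 0) := by
  rw [dotProduct, Fin.sum_univ_succ, Tblk_mulVec_zero]
  simp_rw [Tblk_mulVec_succ]
  set S := ∑ r : Fin m, u r.succ * x r.succ with hS
  have : ∀ j : Fin m, x j.succ * (u j.succ * x 0 + betaOf u * x j.succ
      + u j.succ * S / (betaOf u + u 0))
      = x 0 * (u j.succ * x j.succ) + betaOf u * x j.succ ^ 2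
        + (S / (betaOf u + u 0)) * (u j.succ * x j.succ) := by
    intro j; ring
  rw [Finset.sum_congr rfl fun j _ => this j]
  rw [Finset.sum_add_distrib, Finset.sum_add_distrib, ← Finset.mul_sum, ← Finset.mul_sum,
    ← Finset.mul_sum, ← hS]
  ring

theorem Tblk_posDef (hu : tailNorm u < u 0) : (Tblk u).PosDef := by
  rw [Matrix.posDef_iff_dotProduct_mulVec]
  constructor
  · rw [Matrix.IsHermitian, Matrix.conjTranspose_eq_transpose_of_trivial, Tblk_transpose]
  · intro x hx
    rw [star_trivial, Tblk_quadform]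
    set S := ∑ r : Fin m, u r.succ * x r.succ with hS
    set N := ∑ r : Fin m, x r.succ ^ 2 with hN
    have hb := beta_pos hu
    have hu0 := u0_pos hu
    have hA := A_pos hu
    have hb2 := beta_sq hu
    have hT0 := tailNormSq_nonneg u
    have hCS : S ^ 2 ≤ tailNormSq u * N := by
      simpa [tailNormSq, hN] using
        Finset.sum_mul_sq_le_sq_mul_sq Finset.univ (fun r : Fin m => u r.succ)
          (fun r : Fin m => x r.succ)
    have hNn : 0 ≤ N := Finset.sum_nonneg fun _ _ => sq_nonneg _
    rcases eq_or_lt_of_le hNn with hN0 | hNp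
    · have hz : ∀ r : Fin m, x r.succ = 0 := by
        intro r
        have := (Finset.sum_eq_zero_iff_of_nonneg (fun i _ => sq_nonneg (x i.succ))).1 hN0.symm
          r (Finset.mem_univ r)
        exact pow_eq_zero_iff (by norm_num) |>.1 this
      have hS0 : S = 0 := by simp [hS, hz]
      have hx0 : x 0 ≠ 0 := by
        intro h
        apply hx
        funext j
        refine Fin.cases h hz j
      rw [hS0, ← hN0]
      have : 0 < u 0 * x 0 ^ 2 := by positivity
      simpa using this
    · have key : 0 < (betaOf u + u 0) * (u 0 * x 0 ^ 2 + 2 * x 0 * S + betaOf u * N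
          + S ^ 2 / (betaOf u + u 0)) := by
        have expand : (betaOf u + u 0) * (u 0 * x 0 ^ 2 + 2 * x 0 * S + betaOf u * N
            + S ^ 2 / (betaOf u + u 0))
            = (betaOf u + u 0) * u 0 * x 0 ^ 2 + 2 * (betaOf u + u 0) * x 0 * S
              + (betaOf u + u 0) * betaOf u * N + S ^ 2 := by
          field_simp
        rw [expand]
        have h1 : (betaOf u + u 0) * u 0 - tailNormSq u = betaOf u * (betaOf u + u 0) := by
          linear_combination -hb2
        have hid : u 0 * ((betaOf u + u 0) * u 0 * x 0 ^ 2 + 2 * (betaOf u + u 0) * x 0 * S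
              + (betaOf u + u 0) * betaOf u * N + S ^ 2)
            = (betaOf u + u 0) * (u 0 * x 0 + S) ^ 2
              + betaOf u * (((betaOf u + u 0) * u 0 - tailNormSq u) * N)
              + betaOf u * (tailNormSq u * N - S ^ 2) := by ring
        have h2 : 0 < betaOf u * (((betaOf u + u 0) * u 0 - tailNormSq u) * N) := by
          rw [h1]; positivity
        have h3 : 0 ≤ betaOf u * (tailNormSq u * N - S ^ 2) :=
          mul_nonneg hb.le (by linarith)
        have h4 : 0 ≤ (betaOf u + u 0) * (u 0 * x 0 + S) ^ 2 := by positivity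
        nlinarith [hid, h2, h3, h4]
      by_contra h
      push_neg at h
      nlinarith [key, hA, mul_nonpos_of_nonneg_of_nonpos hA.le h]

lemma mul_Q_mul (B C : Matrix (Fin (m+1)) (Fin (m+1)) ℝ) (j l : Fin (m+1)) :
    (B * (Qblk (m := m)) * C) j l = B j 0 * C 0 l - ∑ r : Fin m, B j r.succ * C r.succ l := by
  have hBQ : ∀ s, (B * (Qblk (m := m))) j s = B j s * (if s = 0 then 1 else -1) := by
    intro s
    rw [Matrix.mul_apply]
    rw [Finset.sum_eq_single s]
    · simp [Qblk]
    · intro r _ hr; simp [Qblk, hr]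
    · simp
  rw [Matrix.mul_apply]
  simp_rw [hBQ]
  rw [Fin.sum_univ_succ]
  simp [Fin.succ_ne_zero, sub_eq_add_neg]

lemma sum_tail_sq (u : Fin (m+1) → ℝ) :
    ∑ r : Fin m, u r.succ * u r.succ = tailNormSq u := by
  simp [tailNormSq, sq]

lemma tail_col_sum (u : Fin (m+1) → ℝ) (l : Fin m) :
    ∑ r : Fin m, u r.succ * ((if r = l then betaOf u else 0)
        + u r.succ * u l.succ / (betaOf u + u 0))
      = betaOf u * u l.succ + u l.succ * tailNormSq u / (betaOf u + u 0) := by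
  have : ∀ r : Fin m, u r.succ * ((if r = l then betaOf u else 0)
        + u r.succ * u l.succ / (betaOf u + u 0))
      = ((if l = r then betaOf u else 0) + u l.succ * u r.succ / (betaOf u + u 0)) * u r.succ := by
    intro r
    rcases eq_or_ne r l with h | h
    · subst h; ring
    · simp [h, Ne.symm h]; ring
  rw [Finset.sum_congr rfl fun r _ => this r, tail_row_sum u (betaOf u) l (fun r => u r.succ),
    sum_tail_sq]

lemma Tblk_Q_Tblk (hu : tailNorm u < u 0) :
    Tblk u * Qblk * Tblk u = (betaOf u ^ 2) • (Qblk (m := m)) := by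
  have hA := A_pos hu
  have hAne : betaOf u + u 0 ≠ 0 := ne_of_gt hA
  have hb2 := beta_sq hu
  have hT : tailNormSq u = u 0 ^ 2 - betaOf u ^ 2 := by linarith
  ext j l
  rw [mul_Q_mul]
  have hT0l : ∀ l, Tblk u 0 l = u l := fun l => by simp [Tblk]
  have hTj0 : ∀ j : Fin m, Tblk u j.succ 0 = u j.succ := fun j => by
    simp [Tblk, Fin.succ_ne_zero]
  have hTss : ∀ j l : Fin m, Tblk u j.succ l.succ
      = (if j = l then betaOf u else 0) + u j.succ * u l.succ / (betaOf u + u 0) := by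
    intro j l; simp [Tblk, Fin.succ_ne_zero, Fin.succ_inj]
  refine Fin.cases ?_ (fun j' => ?_) j
  · refine Fin.cases ?_ (fun l' => ?_) l
    · simp_rw [hT0l, hTj0, sum_tail_sq]
      simp [Qblk]
      rw [hT]; ring
    · simp_rw [hT0l, hTss, tail_col_sum]
      simp [Qblk, Fin.succ_ne_zero, (Fin.succ_ne_zero l').symm]
      rw [hT]
      field_simp
      ring
  · refine Fin.cases ?_ (fun l' => ?_) l
    · simp_rw [hTj0, hT0l]
      have : ∀ r : Fin m, Tblk u j'.succ r.succ * u r.succ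
          = ((if j' = r then betaOf u else 0) + u j'.succ * u r.succ / (betaOf u + u 0))
              * u r.succ := fun r => by rw [hTss]
      rw [Finset.sum_congr rfl fun r _ => this r,
        tail_row_sum u (betaOf u) j' (fun r => u r.succ), sum_tail_sq]
      simp [Qblk, Fin.succ_ne_zero]
      rw [hT]
      field_simp
      ring
    · have step : ∀ r : Fin m, Tblk u j'.succ r.succ * Tblk u r.succ l'.succ
          = ((if j' = r then betaOf u else 0) + u j'.succ * u r.succ / (betaOf u + u 0))
            * Tblk u r.succ l'.succ := fun r => by rw [hTss]
      rw [Finset.sum_congr rfl fun r _ => step r,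
        tail_row_sum u (betaOf u) j' (fun r => Tblk u r.succ l'.succ)]
      have inner : ∑ r : Fin m, u r.succ * Tblk u r.succ l'.succ
          = betaOf u * u l'.succ + u l'.succ * tailNormSq u / (betaOf u + u 0) := by
        simp_rw [hTss]; exact tail_col_sum u l'
      rw [inner, hTj0, hT0l, hTss]
      simp only [Qblk, Matrix.smul_apply, Matrix.of_apply, Fin.succ_ne_zero, if_false,
        Fin.succ_inj, smul_eq_mul]
      rcases eq_or_ne j' l' with h | h
      · subst h
        simp only [if_pos rfl, if_true]
        rw [hT]
        field_simp
        ring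
      · simp only [if_neg h, mul_zero]
        rw [hT]
        field_simp
        ring

theorem block_unique (hu : tailNorm u < u 0)
    {B : Matrix (Fin (m+1)) (Fin (m+1)) ℝ} {θ : ℝ} (hθ : 0 < θ)
    (hq : Bᵀ * Qblk * B = θ ^ 2 • (Qblk (m := m)))
    (hsym : Bᵀ = B) (hpd : B.PosDef) (hcol : B *ᵥ e0 = u) :
    B = Tblk u := by
  have hb := beta_pos hu
  have hu0 := u0_pos hu
  have hA := A_pos hu
  have hAne : betaOf u + u 0 ≠ 0 := ne_of_gt hA
  have hb2 := beta_sq hu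
  have hB0 : ∀ j, B j 0 = u j := by
    intro j
    have := congrFun hcol j
    simpa [Matrix.mulVec, dotProduct, e0, mul_ite, mul_one, mul_zero,
      Finset.sum_ite_eq', Finset.mem_univ] using this
  have hB0' : ∀ j, B 0 j = u j := by
    intro j
    have : Bᵀ j 0 = B j 0 := by rw [hsym]
    rw [Matrix.transpose_apply] at this
    rw [this, hB0]
  have hq' : B * Qblk * B = θ ^ 2 • (Qblk (m := m)) := by rwa [hsym] at hq
  have hθβ : θ ^ 2 = betaOf u ^ 2 := by
    have h00 := congrFun (congrFun hq' 0) 0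
    rw [mul_Q_mul] at h00
    simp only [hB0, hB0', Qblk, Matrix.smul_apply, Matrix.of_apply, if_pos rfl,
      smul_eq_mul, mul_one] at h00
    have hsum : ∑ r : Fin m, u r.succ * u r.succ = tailNormSq u := by simp [tailNormSq, sq]
    rw [hsum] at h00
    norm_num at h00
    linarith [hb2]
  set C : Matrix (Fin m) (Fin m) ℝ := Matrix.of (fun j l => B j.succ l.succ) with hC
  set t : Fin m → ℝ := fun r => u r.succ with ht
  have hCC : C * C = Matrix.vecMulVec t t + (betaOf u ^ 2) • (1 : Matrix (Fin m) (Fin m) ℝ) := by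
    ext j l
    have h := congrFun (congrFun hq' j.succ) l.succ
    rw [mul_Q_mul] at h
    simp only [hB0, hB0', Qblk, Matrix.smul_apply, Matrix.of_apply, Fin.succ_ne_zero,
      if_false, Fin.succ_inj, smul_eq_mul] at h
    have : ∑ r : Fin m, B j.succ r.succ * B r.succ l.succ = (C * C) j l := by
      simp [hC, Matrix.mul_apply]
    rw [this] at h
    simp only [Matrix.add_apply, Matrix.vecMulVec_apply, Matrix.smul_apply,
      Matrix.one_apply, smul_eq_mul, ht]
    rcases eq_or_ne j l with hjl | hjl
    · subst hjl
      simp only [if_pos rfl] at h ⊢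
      norm_num at h ⊢
      rw [← hθβ]
      linarith
    · simp only [if_neg hjl] at h ⊢
      norm_num at h ⊢
      linarith
  have hCquad : ∀ y : Fin m → ℝ, y ⬝ᵥ C *ᵥ y
      = (fun j : Fin (m+1) => Fin.cases 0 y j) ⬝ᵥ B *ᵥ (fun j => Fin.cases 0 y j) := by
    intro y
    rw [dotProduct, dotProduct, Fin.sum_univ_succ]
    simp only [Fin.cases_zero, Fin.cases_succ, zero_mul, zero_add]
    refine Finset.sum_congr rfl fun j _ => ?_
    congr 1
    rw [Matrix.mulVec, Matrix.mulVec, dotProduct, dotProduct, Fin.sum_univ_succ]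
    simp [hC, Matrix.mul_apply]
  have hCpd : C.PosDef := by
    rw [Matrix.posDef_iff_dotProduct_mulVec]
    constructor
    · rw [Matrix.IsHermitian, Matrix.conjTranspose_eq_transpose_of_trivial]
      ext j l
      have : Bᵀ j.succ l.succ = B j.succ l.succ := by rw [hsym]
      rw [Matrix.transpose_apply] at this
      simpa [hC] using this
    · intro y hy
      rw [star_trivial, hCquad]
      have hx : (fun j : Fin (m+1) => (Fin.cases 0 y j : ℝ)) ≠ 0 := by
        intro h
        apply hy
        funext j
        have := congrFun h j.succ
        simpa using this
      have := hpd.dotProduct_mulVec_pos hx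
      rwa [star_trivial] at this
  have hCpsd := hCpd.posSemidef
  have hCt : C *ᵥ t = u 0 • t := by
    have h2 : C *ᵥ (C *ᵥ t) = (u 0 ^ 2) • t := by
      rw [Matrix.mulVec_mulVec, hCC]
      have hvv : Matrix.vecMulVec t t *ᵥ t = (t ⬝ᵥ t) • t := by
        funext j
        simp only [Matrix.mulVec, dotProduct, Matrix.vecMulVec_apply, Pi.smul_apply,
          smul_eq_mul]
        rw [Finset.sum_mul]
        exact Finset.sum_congr rfl fun r _ => by ring
      have htt : t ⬝ᵥ t = tailNormSq u := by simp [dotProduct, ht, tailNormSq, sq]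
      rw [Matrix.add_mulVec, hvv, htt, Matrix.smul_mulVec, Matrix.one_mulVec,
        ← add_smul]
      congr 1
      linarith
    set w := C *ᵥ t - u 0 • t with hw
    have hwz : C *ᵥ w + u 0 • w = 0 := by
      rw [hw, Matrix.mulVec_sub, Matrix.mulVec_smul, h2, smul_sub, smul_smul, ← sq]
      abel
    by_contra hne
    have hwne : w ≠ 0 := fun h => hne (by rwa [hw, sub_eq_zero] at h)
    have h3 : w ⬝ᵥ (C *ᵥ w + u 0 • w) = 0 := by rw [hwz, dotProduct_zero]
    rw [dotProduct_add, dotProduct_smul] at h3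
    have h4 := hCpd.dotProduct_mulVec_pos hwne
    rw [star_trivial] at h4
    have h5 : 0 < w ⬝ᵥ w := by
      rcases Function.ne_iff.1 hwne with ⟨j, hj⟩
      have : ∀ r, 0 ≤ w r * w r := fun r => mul_self_nonneg _
      have := Finset.sum_pos' (fun r _ => this r)
        ⟨j, Finset.mem_univ j, mul_self_pos.2 hj⟩
      simpa [dotProduct] using this
    have : (0:ℝ) < w ⬝ᵥ C *ᵥ w + u 0 • (w ⬝ᵥ w) := by
      have := mul_pos hu0 h5
      simp only [smul_eq_mul]
      linarith
    rw [h3] at this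
    exact lt_irrefl 0 this
  have hfac : (C + betaOf u • 1) * (C - betaOf u • 1
      - (betaOf u + u 0)⁻¹ • Matrix.vecMulVec t t) = 0 := by
    have hCvv : C * Matrix.vecMulVec t t = u 0 • Matrix.vecMulVec t t := by
      ext j l
      simp only [Matrix.mul_apply, Matrix.vecMulVec_apply, Matrix.smul_apply, smul_eq_mul]
      have : ∑ r, C j r * (t r * t l) = (C *ᵥ t) j * t l := by
        rw [Matrix.mulVec, dotProduct, Finset.sum_mul]
        exact Finset.sum_congr rfl fun r _ => by ring
      rw [this, hCt]
      simp [smul_eq_mul]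
      ring
    have h1 : (C + betaOf u • 1) * ((betaOf u + u 0)⁻¹ • Matrix.vecMulVec t t)
        = ((betaOf u + u 0)⁻¹ * (u 0 + betaOf u)) • Matrix.vecMulVec t t := by
      rw [Matrix.mul_smul, Matrix.add_mul, Matrix.smul_mul, Matrix.one_mul, hCvv,
        ← add_smul, smul_smul]
    have h2 : (C + betaOf u • 1) * (C - betaOf u • 1) = Matrix.vecMulVec t t := by
      simp only [mul_sub, Matrix.add_mul, Matrix.mul_smul, Matrix.smul_mul,
        Matrix.one_mul, Matrix.mul_one, hCC, smul_smul]
      rw [smul_add, smul_smul, ← sq]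
      abel
    rw [mul_sub, h1, h2]
    have h3 : (betaOf u + u 0)⁻¹ * (u 0 + betaOf u) = 1 := by
      rw [add_comm (u 0)]; exact inv_mul_cancel₀ hAne
    rw [h3, one_smul, sub_self]
  have hCβpd : (C + betaOf u • 1).PosDef := by
    rw [Matrix.posDef_iff_dotProduct_mulVec]
    constructor
    · rw [Matrix.IsHermitian, Matrix.conjTranspose_eq_transpose_of_trivial,
        Matrix.transpose_add, Matrix.transpose_smul, Matrix.transpose_one]
      congr 1
      rw [← Matrix.conjTranspose_eq_transpose_of_trivial]
      exact hCpd.1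
    · intro y hy
      rw [star_trivial, Matrix.add_mulVec, dotProduct_add, Matrix.smul_mulVec,
        Matrix.one_mulVec, dotProduct_smul]
      have h4 := hCpd.dotProduct_mulVec_pos hy
      rw [star_trivial] at h4
      have h5 : 0 < y ⬝ᵥ y := by
        rcases Function.ne_iff.1 hy with ⟨j, hj⟩
        have := Finset.sum_pos' (fun r (_ : r ∈ Finset.univ) => mul_self_nonneg (y r))
          ⟨j, Finset.mem_univ j, mul_self_pos.2 hj⟩
        simpa [dotProduct] using this
      have := mul_pos hb h5
      simp only [smul_eq_mul]
      linarith
  have hCeq : C = betaOf u • 1 + (betaOf u + u 0)⁻¹ • Matrix.vecMulVec t t := by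
    have hunit := hCβpd.isUnit
    have hz : (C + betaOf u • 1) * (C - betaOf u • 1
        - (betaOf u + u 0)⁻¹ • Matrix.vecMulVec t t) = (C + betaOf u • 1) * 0 := by
      rw [hfac, mul_zero]
    have h6 := hunit.mul_left_cancel hz
    have h7 : C - (betaOf u • 1 + (betaOf u + u 0)⁻¹ • Matrix.vecMulVec t t) = 0 := by
      rw [← sub_sub]; exact h6
    exact sub_eq_zero.1 h7
  ext j l
  refine Fin.cases ?_ (fun j' => ?_) j
  · refine Fin.cases ?_ (fun l' => ?_) l
    · rw [hB0]; simp [Tblk]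
    · rw [hB0']; simp [Tblk]
  · refine Fin.cases ?_ (fun l' => ?_) l
    · rw [hB0]; simp [Tblk, Fin.succ_ne_zero]
    · have hBC : B j'.succ l'.succ = C j' l' := by simp [hC]
      rw [hBC, hCeq]
      simp only [Matrix.add_apply, Matrix.smul_apply, Matrix.one_apply,
        Matrix.vecMulVec_apply, smul_eq_mul, Tblk, Matrix.of_apply, Fin.succ_ne_zero,
        if_false, Fin.succ_inj, ht]
      rcases eq_or_ne j' l' with h | h
      · subst h; rw [if_pos rfl, if_pos rfl]; ring
      · rw [if_neg h, if_neg h]; ring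

end AuxBlock

section AuxBlockDiag

variable {k : ℕ} {d : Fin k → ℕ}

lemma blockDiagonal'_mulVec (M : ∀ i, Matrix (Fin (d i + 1)) (Fin (d i + 1)) ℝ)
    (x : Idx d → ℝ) (a : Idx d) :
    (Matrix.blockDiagonal' M *ᵥ x) a = ((M a.1) *ᵥ blk x a.1) a.2 := by
  obtain ⟨i, j⟩ := a
  rw [Matrix.mulVec, dotProduct, ← Finset.univ_sigma_univ, Finset.sum_sigma]
  rw [Finset.sum_eq_single i]
  · simp [Matrix.blockDiagonal'_apply_eq, Matrix.mulVec, dotProduct, blk]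
  · intro i' _ hi'
    apply Finset.sum_eq_zero
    intro j' _
    rw [Matrix.blockDiagonal'_apply_ne _ _ _ (Ne.symm hi')]
    exact zero_mul _
  · simp

lemma blockDiagonal'_dot (M : ∀ i, Matrix (Fin (d i + 1)) (Fin (d i + 1)) ℝ)
    (x : Idx d → ℝ) :
    x ⬝ᵥ (Matrix.blockDiagonal' M *ᵥ x) = ∑ i, blk x i ⬝ᵥ ((M i) *ᵥ blk x i) := by
  rw [dotProduct, ← Finset.univ_sigma_univ, Finset.sum_sigma]
  refine Finset.sum_congr rfl fun i _ => ?_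
  rw [dotProduct]
  refine Finset.sum_congr rfl fun j _ => ?_
  rw [blockDiagonal'_mulVec]
  rfl

lemma posDef_blockDiagonal' {M : ∀ i, Matrix (Fin (d i + 1)) (Fin (d i + 1)) ℝ}
    (h : ∀ i, (M i).PosDef) : (Matrix.blockDiagonal' M).PosDef := by
  rw [Matrix.posDef_iff_dotProduct_mulVec]
  constructor
  · rw [Matrix.IsHermitian, Matrix.conjTranspose_eq_transpose_of_trivial,
      Matrix.blockDiagonal'_transpose]
    have he : (fun i => (M i)ᵀ) = M := by
      funext i
      have := (h i).1
      rwa [Matrix.IsHermitian, Matrix.conjTranspose_eq_transpose_of_trivial] at this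
    rw [he]
  · intro x hx
    rw [star_trivial, blockDiagonal'_dot]
    rcases Function.ne_iff.1 hx with ⟨a, ha⟩
    have hterm : ∀ i, 0 ≤ blk x i ⬝ᵥ ((M i) *ᵥ blk x i) := by
      intro i
      have := (h i).posSemidef.dotProduct_mulVec_nonneg (blk x i)
      rwa [star_trivial] at this
    refine Finset.sum_pos' (fun i _ => hterm i) ⟨a.1, Finset.mem_univ _, ?_⟩
    have hblk : blk x a.1 ≠ 0 := by
      intro h0
      exact ha (congrFun h0 a.2)
    have := (h a.1).dotProduct_mulVec_pos hblk
    rwa [star_trivial] at this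

lemma posDef_block_of_blockDiagonal' {M : ∀ i, Matrix (Fin (d i + 1)) (Fin (d i + 1)) ℝ}
    (h : (Matrix.blockDiagonal' M).PosDef) (hsym : ∀ i, (M i)ᵀ = M i) (i : Fin k) :
    (M i).PosDef := by
  rw [Matrix.posDef_iff_dotProduct_mulVec]
  constructor
  · rw [Matrix.IsHermitian, Matrix.conjTranspose_eq_transpose_of_trivial, hsym]
  · intro y hy
    set x : Idx d → ℝ := fun a => if ha : a.1 = i then y (Fin.cast (by rw [ha]) a.2) else 0
      with hxdef
    have hblki : blk x i = y := by
      funext j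
      simp only [blk, hxdef, dif_pos rfl]
      congr 1
    have hblkne : ∀ i', i' ≠ i → blk x i' = 0 := by
      intro i' hi'
      funext j
      simp [blk, hxdef, hi']
    have hxne : x ≠ 0 := by
      intro h0
      apply hy
      funext j
      have := congrFun h0 ⟨i, j⟩
      rw [← hblki]
      simpa [blk] using this
    have hq := h.dotProduct_mulVec_pos hxne
    rw [star_trivial, blockDiagonal'_dot] at hq
    rw [Finset.sum_eq_single i] at hq
    · rw [star_trivial, ← hblki]; exact hq
    · intro i' _ hi'
      rw [hblkne i' hi']
      simp
    · simp

end AuxBlockDiag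

/-- Proposition 2: `T_v` is the unique symmetric positive definite scaling matrix
mapping `e` to `v`. -/
theorem Tv_unique_scaling {k : ℕ} {d : Fin k → ℕ}
    (v : Idx d → ℝ) (hv : inIntK v) :
    TV v ∈ scalingGroup d ∧ (TV v)ᵀ = TV v ∧ (TV v).PosDef ∧
    (TV v).mulVec unitE = v ∧
    (∀ D ∈ scalingGroup d, Dᵀ = D → D.PosDef → D.mulVec unitE = v → D = TV v) := by
  have hui : ∀ i : Fin k, tailNorm (blk v i) < blk v i 0 := fun i => hv i
  have hbpos : ∀ i : Fin k, 0 < betaOf (blk v i) := fun i => beta_pos (hui i)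
  have hblkE : ∀ i : Fin k, blk (unitE (d := d)) i = e0 := fun i => rfl
  refine ⟨?_, ?_, ?_, ?_, ?_⟩
  · -- membership in the scaling group
    refine ⟨fun i => betaOf (blk v i),
      fun i => (betaOf (blk v i))⁻¹ • Tblk (blk v i), hbpos, fun i => ?_, ?_⟩
    · rw [Matrix.transpose_smul, Tblk_transpose, Matrix.smul_mul, Matrix.smul_mul,
        Matrix.mul_smul, smul_smul, Tblk_Q_Tblk (hui i), smul_smul]
      have hne := (hbpos i).ne'
      have : (betaOf (blk v i))⁻¹ * (betaOf (blk v i))⁻¹ * betaOf (blk v i) ^ 2 = 1 := by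
        field_simp [sq]
      rw [this, one_smul]
    · show TV v = _
      unfold TV
      refine congrArg Matrix.blockDiagonal' (funext fun i => ?_)
      rw [smul_smul, mul_inv_cancel₀ (hbpos i).ne', one_smul]
  · -- symmetry
    show (TV v)ᵀ = TV v
    unfold TV
    rw [Matrix.blockDiagonal'_transpose]
    exact congrArg Matrix.blockDiagonal' (funext fun i => Tblk_transpose (blk v i))
  · -- positive definiteness
    exact posDef_blockDiagonal' fun i => Tblk_posDef (hui i)
  · -- maps e to v
    funext a
    obtain ⟨i, j⟩ := a
    show (Matrix.blockDiagonal' (fun i => Tblk (blk v i)) *ᵥ unitE) ⟨i, j⟩ = v ⟨i, j⟩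
    rw [blockDiagonal'_mulVec]
    show (Tblk (blk v i) *ᵥ blk (unitE (d := d)) i) j = v ⟨i, j⟩
    rw [hblkE i, Tblk_mulVec_e0]
    rfl
  · -- uniqueness
    intro D hD hDsym hDpd hDe
    obtain ⟨θ, G, hθ, hG, rfl⟩ := hD
    set Bf : ∀ i, Matrix (Fin (d i + 1)) (Fin (d i + 1)) ℝ := fun i => θ i • G i with hBf
    have hsymB : ∀ i, (Bf i)ᵀ = Bf i := by
      intro i
      ext j l
      have h := congrFun (congrFun hDsym ⟨i, j⟩) ⟨i, l⟩
      rw [Matrix.transpose_apply, Matrix.blockDiagonal'_apply_eq,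
        Matrix.blockDiagonal'_apply_eq] at h
      rw [Matrix.transpose_apply]
      exact h
    have hpdB : ∀ i, (Bf i).PosDef := fun i =>
      posDef_block_of_blockDiagonal' hDpd hsymB i
    have hcolB : ∀ i, Bf i *ᵥ e0 = blk v i := by
      intro i
      funext j
      have h := congrFun hDe ⟨i, j⟩
      rw [blockDiagonal'_mulVec] at h
      exact h
    have hqB : ∀ i, (Bf i)ᵀ * Qblk * Bf i = (θ i) ^ 2 • (Qblk (m := d i)) := by
      intro i
      rw [hBf]
      rw [Matrix.transpose_smul, Matrix.smul_mul, Matrix.smul_mul, Matrix.mul_smul,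
        smul_smul, hG i, ← sq]
    have hBeq : ∀ i, Bf i = Tblk (blk v i) := fun i =>
      block_unique (hui i) (hθ i) (hqB i) (hsymB i) (hpdB i) (hcolB i)
    show Matrix.blockDiagonal' Bf = TV v
    unfold TV
    exact congrArg Matrix.blockDiagonal' (funext hBeq)

end SOCP
end

section
/- Suppose (Δx, Δy, Δs) satisfies the scaled Newton system for some ν ∈ ℝ and D ∈ G. Then for every α ∈ ℝ: A x(α) = (1 − (1−ν)α) A x; Aᵀ y(α) + C x(α) + s(α) = (1 − (1−ν)α)(Aᵀy + Cx + s); x(α)ᵀ s(α) = (1 − (1−ν)α) xᵀs; and Δxᵀ Δs = 0. -/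
open scoped BigOperators
open Matrix

namespace SOCP

section Helpers

variable {k : ℕ} {d : Fin k → ℕ}

lemma dotV_eq {ι : Type*} [Fintype ι] (u v : ι → ℝ) : dotV u v = u ⬝ᵥ v := rfl

lemma dot_unitE (v : Idx d → ℝ) :
    dotV (unitE (d := d)) v = ∑ i : Fin k, v ⟨i, 0⟩ := by
  unfold dotV unitE
  rw [← Finset.univ_sigma_univ, Finset.sum_sigma]
  simp only [ite_mul, one_mul, zero_mul]
  apply Finset.sum_congr rfl
  intro i _
  rw [Finset.sum_ite_eq' Finset.univ (0 : Fin (d i + 1)) (fun j => v ⟨i, j⟩)]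
  simp

lemma mulVec_blockDiagonal'_apply
    (f : ∀ i : Fin k, Matrix (Fin (d i + 1)) (Fin (d i + 1)) ℝ)
    (w : Idx d → ℝ) (i : Fin k) (j : Fin (d i + 1)) :
    ((Matrix.blockDiagonal' f).mulVec w) ⟨i, j⟩ = ∑ j', f i j j' * w ⟨i, j'⟩ := by
  unfold Matrix.mulVec dotProduct
  rw [← Finset.univ_sigma_univ, Finset.sum_sigma]
  rw [Finset.sum_eq_single_of_mem i (Finset.mem_univ i)]
  · apply Finset.sum_congr rfl
    intro j' _
    show Matrix.blockDiagonal' f ⟨i, j⟩ ⟨i, j'⟩ * w ⟨i, j'⟩ = _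
    rw [Matrix.blockDiagonal'_apply_eq]
  · intro b _ hb
    apply Finset.sum_eq_zero
    intro j' _
    show Matrix.blockDiagonal' f ⟨i, j⟩ ⟨b, j'⟩ * w ⟨b, j'⟩ = 0
    rw [Matrix.blockDiagonal'_apply_ne _ _ _ (fun h => hb h.symm), zero_mul]

lemma dot_unitE_matV (u w : Idx d → ℝ) :
    dotV unitE ((matV u).mulVec w) = dotV u w := by
  rw [dot_unitE]
  unfold matV
  simp only [mulVec_blockDiagonal'_apply]
  unfold dotV
  rw [← Finset.univ_sigma_univ, Finset.sum_sigma]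
  apply Finset.sum_congr rfl
  intro i _
  apply Finset.sum_congr rfl
  intro j' _
  simp [arrowBlk, blk]

lemma dot_unitE_jmul (u v : Idx d → ℝ) :
    dotV unitE (jmul u v) = dotV u v := by
  rw [dot_unitE]
  unfold jmul dotV
  rw [← Finset.univ_sigma_univ, Finset.sum_sigma]
  simp

lemma dot_unitE_unitE : dotV (unitE (d := d)) unitE = (k : ℝ) := by
  rw [dot_unitE]
  unfold unitE
  simp

lemma Qblk_mul_Qblk {m : ℕ} : (Qblk (m := m)) * Qblk = 1 := by
  have hQ : Qblk (m := m) = Matrix.diagonal (fun j => if j = 0 then (1 : ℝ) else -1) := by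
    ext j j'
    by_cases h : j = j' <;> simp [Qblk, Matrix.diagonal_apply, h]
  rw [hQ, Matrix.diagonal_mul_diagonal]
  have h1 : (fun i : Fin (m + 1) => (if i = 0 then (1 : ℝ) else -1) * (if i = 0 then 1 else -1))
      = fun _ => (1 : ℝ) := by
    funext i
    split_ifs <;> norm_num
  rw [h1, Matrix.diagonal_one]

lemma scalingGroup_isUnit_det {D : Matrix (Idx d) (Idx d) ℝ}
    (hD : D ∈ scalingGroup d) : IsUnit D.det := by
  obtain ⟨θ, G, hθ, hG, rfl⟩ := hD
  set E : Matrix (Idx d) (Idx d) ℝ :=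
    Matrix.blockDiagonal' (fun i => (θ i)⁻¹ • (Qblk * (G i)ᵀ * Qblk)) with hE
  have hblk : (fun i => ((θ i)⁻¹ • (Qblk * (G i)ᵀ * Qblk)) * (θ i • G i))
      = (1 : ∀ i : Fin k, Matrix (Fin (d i + 1)) (Fin (d i + 1)) ℝ) := by
    funext i
    show ((θ i)⁻¹ • (Qblk * (G i)ᵀ * Qblk)) * (θ i • G i) = 1
    rw [smul_mul_smul_comm, inv_mul_cancel₀ (hθ i).ne', one_smul,
      Matrix.mul_assoc, Matrix.mul_assoc, ← Matrix.mul_assoc ((G i)ᵀ), hG i,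
      Qblk_mul_Qblk]
  have hED : E * Matrix.blockDiagonal' (fun i => θ i • G i) = 1 := by
    rw [hE, ← Matrix.blockDiagonal'_mul, hblk, Matrix.blockDiagonal'_one]
  have h1 : E.det * (Matrix.blockDiagonal' (fun i => θ i • G i)).det = 1 := by
    rw [← Matrix.det_mul, hED, Matrix.det_one]
  exact IsUnit.of_mul_eq_one _ (by rw [mul_comm]; exact h1)

end Helpers

/-- Theorem 3: improvement of the residuals and gap along the search direction. -/
theorem newton_step_identities {k p : ℕ} {d : Fin k → ℕ} (hk : 0 < k)
    (A : Matrix (Fin p) (Idx d) ℝ) (hrank : A.rank = p)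
    (Cm : Matrix (Idx d) (Idx d) ℝ) (hC : Cmᵀ = -Cm)
    (x s : Idx d → ℝ) (y : Fin p → ℝ) (hx : inIntK x) (hs : inIntK s)
    (ν : ℝ) (D : Matrix (Idx d) (Idx d) ℝ) (hD : D ∈ scalingGroup d)
    (dx ds : Idx d → ℝ) (dy : Fin p → ℝ)
    (hN : NewtonSys A Cm x y s ν D dx dy ds) :
    (∀ α : ℝ, A.mulVec (x + α • dx) = (1 - (1 - ν) * α) • A.mulVec x) ∧
    (∀ α : ℝ, Aᵀ.mulVec (y + α • dy) + Cm.mulVec (x + α • dx) + (s + α • ds)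
      = (1 - (1 - ν) * α) • (Aᵀ.mulVec y + Cm.mulVec x + s)) ∧
    (∀ α : ℝ, dotV (x + α • dx) (s + α • ds) = (1 - (1 - ν) * α) * dotV x s) ∧
    dotV dx ds = 0 := by
  obtain ⟨e1, e2, e3⟩ := hN
  have hk' : (k : ℝ) ≠ 0 := Nat.cast_ne_zero.mpr hk.ne'
  have hDinv : D⁻¹ * D = 1 := Matrix.nonsing_inv_mul D (scalingGroup_isUnit_det hD)
  -- transpose/inverse dot-product identities
  have hu1 : ∀ v w : Idx d → ℝ, ((D⁻¹)ᵀ.mulVec v) ⬝ᵥ (D.mulVec w) = v ⬝ᵥ w := by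
    intro v w
    rw [Matrix.mulVec_transpose, ← Matrix.dotProduct_mulVec, Matrix.mulVec_mulVec,
      hDinv, Matrix.one_mulVec]
  have hu2 : (D.mulVec s) ⬝ᵥ ((D⁻¹)ᵀ.mulVec dx) = s ⬝ᵥ dx := by
    rw [dotProduct_comm, hu1, dotProduct_comm]
  have hAT : ∀ (v : Idx d → ℝ) (z : Fin p → ℝ), v ⬝ᵥ (Aᵀ.mulVec z) = (A.mulVec v) ⬝ᵥ z := by
    intro v z
    rw [Matrix.dotProduct_mulVec, Matrix.vecMul_transpose]
  have hskew : ∀ v : Idx d → ℝ, v ⬝ᵥ (Cm.mulVec v) = 0 := by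
    intro v
    have h := Matrix.dotProduct_mulVec v Cm v
    rw [← Matrix.mulVec_transpose, hC, Matrix.neg_mulVec, neg_dotProduct,
      dotProduct_comm (Cm.mulVec v) v] at h
    linarith
  have hskew2 : dx ⬝ᵥ (Cm.mulVec x) = -(x ⬝ᵥ (Cm.mulVec dx)) := by
    have h := Matrix.dotProduct_mulVec dx Cm x
    rw [← Matrix.mulVec_transpose, hC, Matrix.neg_mulVec, neg_dotProduct,
      dotProduct_comm (Cm.mulVec dx) x] at h
    linarith
  -- key scalar identity from the third Newton equation
  have key1 : x ⬝ᵥ ds + s ⬝ᵥ dx = -((1 - ν) * (x ⬝ᵥ s)) := by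
    have h3 := congrArg (fun v => dotV unitE v) e3
    simp only [dotV_eq] at h3
    rw [dotProduct_add, dotProduct_sub] at h3
    rw [show (unitE : Idx d → ℝ) ⬝ᵥ ((matV ((D⁻¹)ᵀ.mulVec x)).mulVec (D.mulVec ds))
        = dotV unitE ((matV ((D⁻¹)ᵀ.mulVec x)).mulVec (D.mulVec ds)) from rfl,
      show (unitE : Idx d → ℝ) ⬝ᵥ ((matV (D.mulVec s)).mulVec ((D⁻¹)ᵀ.mulVec dx))
        = dotV unitE ((matV (D.mulVec s)).mulVec ((D⁻¹)ᵀ.mulVec dx)) from rfl,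
      dot_unitE_matV, dot_unitE_matV] at h3
    rw [dotProduct_smul] at h3
    rw [show (unitE : Idx d → ℝ) ⬝ᵥ unitE = dotV unitE unitE from rfl, dot_unitE_unitE] at h3
    rw [show (unitE : Idx d → ℝ) ⬝ᵥ jmul ((D⁻¹)ᵀ.mulVec x) (D.mulVec s)
        = dotV unitE (jmul ((D⁻¹)ᵀ.mulVec x) (D.mulVec s)) from rfl, dot_unitE_jmul] at h3
    simp only [dotV_eq, smul_eq_mul] at h3
    rw [hu1 x ds, hu2, hu1 x s] at h3
    have hmu : ν * muV x s * (k : ℝ) = ν * (x ⬝ᵥ s) := by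
      unfold muV
      rw [dotV_eq]
      field_simp
    rw [hmu] at h3
    linarith
  -- dot the second Newton equation with x and with dx
  have h2x := congrArg (fun v => x ⬝ᵥ v) e2
  have h2dx := congrArg (fun v => dx ⬝ᵥ v) e2
  simp only [dotProduct_add, dotProduct_neg, dotProduct_smul,
    smul_eq_mul] at h2x h2dx
  rw [hAT, hAT, hskew] at h2x
  rw [hAT, hAT, hskew] at h2dx
  rw [e1, hskew2] at h2dx
  simp only [neg_dotProduct, smul_dotProduct, smul_eq_mul] at h2x h2dx
  -- abbreviations
  set p1 := x ⬝ᵥ s with hp1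
  set p2 := dx ⬝ᵥ s with hp2
  set p3 := x ⬝ᵥ ds with hp3
  set p4 := dx ⬝ᵥ ds with hp4
  set q1 := (A.mulVec x) ⬝ᵥ y with hq1
  set q2 := (A.mulVec x) ⬝ᵥ dy with hq2
  set c1 := x ⬝ᵥ (Cm.mulVec dx) with hc1
  have key3 : p3 + p2 = -((1 - ν) * p1) := by
    rw [hp2, dotProduct_comm dx s]
    exact key1
  have key4 : p4 = 0 := by linear_combination h2dx + (1 - ν) * h2x - (1 - ν) * key3
  refine ⟨?_, ?_, ?_, key4⟩
  · intro α
    rw [Matrix.mulVec_add, Matrix.mulVec_smul, e1]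
    ext a
    simp only [Pi.add_apply, Pi.smul_apply, Pi.neg_apply, smul_eq_mul]
    ring
  · intro α
    have hx' : Aᵀ.mulVec (y + α • dy) = Aᵀ.mulVec y + α • Aᵀ.mulVec dy := by
      rw [Matrix.mulVec_add, Matrix.mulVec_smul]
    have hc' : Cm.mulVec (x + α • dx) = Cm.mulVec x + α • Cm.mulVec dx := by
      rw [Matrix.mulVec_add, Matrix.mulVec_smul]
    rw [hx', hc']
    have hcomb : Aᵀ.mulVec y + α • Aᵀ.mulVec dy + (Cm.mulVec x + α • Cm.mulVec dx)
        + (s + α • ds)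
        = (Aᵀ.mulVec y + Cm.mulVec x + s)
          + α • (Aᵀ.mulVec dy + Cm.mulVec dx + ds) := by
      ext a
      simp only [Pi.add_apply, Pi.smul_apply, smul_eq_mul]
      ring
    rw [hcomb, e2]
    ext a
    simp only [Pi.add_apply, Pi.smul_apply, Pi.neg_apply, smul_eq_mul]
    ring
  · intro α
    rw [dotV_eq, dotV_eq]
    simp only [dotProduct_add, add_dotProduct, dotProduct_smul,
      smul_dotProduct, smul_eq_mul]
    linear_combination α * key3 + α ^ 2 * key4
end SOCP
end
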